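/- Let $n\ge 3$, let $\xi_F\in\mathbb{R}$, $\eta_F\in\mathbb{R}^{n-1}$ with $\eta_F\ne 0$, and let $T$ be a symmetric 4-tensor on $\mathbb{R}^{n-1}$. Suppose that for all unit vectors $\hat Y\in\mathbb{R}^{n-1}$, $\big\langle \big((\xi_F^2+1)^{-1}(\hat Y\cdot\eta_F)\,\eta_F+\hat Y\big)^{\otimes 4}, T\big\rangle = 0$. Then $T=0$. -/

import Mathlib

open RealInnerProductSpace

set_option linter.unusedVariables false

theorem polar4 {E : Type*} [AddCommGroup E] [Module ℝ E]
    (T : MultilinearMap ℝ (fun _ : Fin 4 => E) ℝ)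
    (hsym : ∀ (σ : Equiv.Perm (Fin 4)) (x : Fin 4 → E), T (x ∘ σ) = T x)
    (hdiag : ∀ v : E, T (fun _ => v) = 0) : T = 0 := by
  -- update lemmas
  have u0 : ∀ a b c d x : E, Function.update ![a,b,c,d] (0:Fin 4) x = ![x,b,c,d] := by
    intros; funext i; fin_cases i <;> simp
  have u1 : ∀ a b c d x : E, Function.update ![a,b,c,d] (1:Fin 4) x = ![a,x,c,d] := by
    intros; funext i; fin_cases i <;> simp
  have u2 : ∀ a b c d x : E, Function.update ![a,b,c,d] (2:Fin 4) x = ![a,b,x,d] := by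
    intros; funext i; fin_cases i <;> simp
  have u3 : ∀ a b c d x : E, Function.update ![a,b,c,d] (3:Fin 4) x = ![a,b,c,x] := by
    intros; funext i; fin_cases i <;> simp
  -- additivity in each slot
  have add0 : ∀ x y b c d : E, T ![x+y,b,c,d] = T ![x,b,c,d] + T ![y,b,c,d] := by
    intro x y b c d
    have := T.map_update_add ![x,b,c,d] 0 x y
    simpa [u0] using this
  have add1 : ∀ a x y c d : E, T ![a,x+y,c,d] = T ![a,x,c,d] + T ![a,y,c,d] := by
    intro a x y c d
    have := T.map_update_add ![a,x,c,d] 1 x y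
    simpa [u1] using this
  have add2 : ∀ a b x y d : E, T ![a,b,x+y,d] = T ![a,b,x,d] + T ![a,b,y,d] := by
    intro a b x y d
    have := T.map_update_add ![a,b,x,d] 2 x y
    simpa [u2] using this
  have add3 : ∀ a b c x y : E, T ![a,b,c,x+y] = T ![a,b,c,x] + T ![a,b,c,y] := by
    intro a b c x y
    have := T.map_update_add ![a,b,c,x] 3 x y
    simpa [u3] using this
  -- smul in each slot
  have sm0 : ∀ (t : ℝ) (x b c d : E), T ![t•x,b,c,d] = t * T ![x,b,c,d] := by
    intro t x b c d
    have := T.map_update_smul ![x,b,c,d] 0 t x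
    simpa [u0] using this
  have sm1 : ∀ (t : ℝ) (a x c d : E), T ![a,t•x,c,d] = t * T ![a,x,c,d] := by
    intro t a x c d
    have := T.map_update_smul ![a,x,c,d] 1 t x
    simpa [u1] using this
  have sm2 : ∀ (t : ℝ) (a b x d : E), T ![a,b,t•x,d] = t * T ![a,b,x,d] := by
    intro t a b x d
    have := T.map_update_smul ![a,b,x,d] 2 t x
    simpa [u2] using this
  have sm3 : ∀ (t : ℝ) (a b c x : E), T ![a,b,c,t•x] = t * T ![a,b,c,x] := by
    intro t a b c x
    have := T.map_update_smul ![a,b,c,x] 3 t x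
    simpa [u3] using this
  -- adjacent swaps
  have sw01 : ∀ p q r s : E, T ![p,q,r,s] = T ![q,p,r,s] := by
    intro p q r s
    have := hsym (Equiv.swap 0 1) ![p,q,r,s]
    rw [show (![p,q,r,s] ∘ Equiv.swap 0 1) = ![q,p,r,s] by
      funext i; fin_cases i <;> simp [Equiv.swap_apply_def]] at this
    exact this.symm
  have sw12 : ∀ p q r s : E, T ![p,q,r,s] = T ![p,r,q,s] := by
    intro p q r s
    have := hsym (Equiv.swap 1 2) ![p,q,r,s]
    rw [show (![p,q,r,s] ∘ Equiv.swap 1 2) = ![p,r,q,s] by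
      funext i; fin_cases i <;> simp [Equiv.swap_apply_def]] at this
    exact this.symm
  have sw23 : ∀ p q r s : E, T ![p,q,r,s] = T ![p,q,s,r] := by
    intro p q r s
    have := hsym (Equiv.swap 2 3) ![p,q,r,s]
    rw [show (![p,q,r,s] ∘ Equiv.swap 2 3) = ![p,q,s,r] by
      funext i; fin_cases i <;> simp [Equiv.swap_apply_def]] at this
    exact this.symm
  -- diagonal in cons form
  have hdiag' : ∀ v : E, T ![v,v,v,v] = 0 := by
    intro v
    have := hdiag v
    rw [show (fun _ : Fin 4 => v) = ![v,v,v,v] by funext i; fin_cases i <;> rfl] at this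
    exact this
  -- canonicalization lemmas (one b, two b's, three b's)
  have p1 : ∀ a b : E, T ![a,a,b,a] = T ![a,a,a,b] := fun a b => sw23 a a b a
  have p2 : ∀ a b : E, T ![a,b,a,a] = T ![a,a,a,b] := by
    intro a b; rw [sw12]; exact p1 a b
  have p3 : ∀ a b : E, T ![b,a,a,a] = T ![a,a,a,b] := by
    intro a b; rw [sw01]; exact p2 a b
  have q1 : ∀ a b : E, T ![a,b,a,b] = T ![a,a,b,b] := fun a b => (sw12 a a b b).symm ▸ sw12 a b a b
  have q2 : ∀ a b : E, T ![b,a,a,b] = T ![a,a,b,b] := by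
    intro a b; rw [sw01]; exact q1 a b
  have q3 : ∀ a b : E, T ![a,b,b,a] = T ![a,a,b,b] := by
    intro a b; rw [sw23]; exact q1 a b
  have q4 : ∀ a b : E, T ![b,a,b,a] = T ![a,a,b,b] := by
    intro a b; rw [sw01]; exact q3 a b
  have q5 : ∀ a b : E, T ![b,b,a,a] = T ![a,a,b,b] := by
    intro a b; rw [sw12]; exact q4 a b
  have r1 : ∀ a b : E, T ![b,a,b,b] = T ![a,b,b,b] := fun a b => by rw [sw01]
  have r2 : ∀ a b : E, T ![b,b,a,b] = T ![a,b,b,b] := by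
    intro a b; rw [sw12]; exact r1 a b
  have r3 : ∀ a b : E, T ![b,b,b,a] = T ![a,b,b,b] := by
    intro a b; rw [sw23]; exact r2 a b
  -- Step A: binomial identity
  have Hab : ∀ a b : E, 4 * T ![a,a,a,b] + 6 * T ![a,a,b,b] + 4 * T ![a,b,b,b] = 0 := by
    intro a b
    have H := hdiag' (a + b)
    simp only [add0, add1, add2, add3] at H
    rw [p1 a b, p2 a b, p3 a b, q1 a b, q2 a b, q3 a b, q4 a b, q5 a b,
      r1 a b, r2 a b, r3 a b, hdiag' a, hdiag' b] at H
    linarith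
  have key : ∀ a b : E, T ![a,a,a,b] = 0 ∧ T ![a,a,b,b] = 0 ∧ T ![a,b,b,b] = 0 := by
    intro a b
    have H1 := Hab a b
    have H2 := Hab a ((-1:ℝ) • b)
    have H3 := Hab a ((2:ℝ) • b)
    simp only [sm1, sm2, sm3] at H2 H3
    ring_nf at H1 H2 H3
    refine ⟨by linarith, by linarith, by linarith⟩
  -- Step B
  have stepB : ∀ a b c : E, T ![a,a,b,c] = 0 := by
    intro a b c
    have H := (key a (b + c)).2.1
    rw [add2, add3, add3] at H
    rw [show T ![a,a,c,b] = T ![a,a,b,c] from sw23 a a c b] at H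
    have h1 := (key a b).2.1
    have h2 := (key a c).2.1
    linarith
  have stepC : ∀ p q r s : E, T ![p,q,r,s] = 0 := by
    intro p q r s
    have H := stepB (p + q) r s
    rw [add0, add1, add1] at H
    rw [show T ![q,p,r,s] = T ![p,q,r,s] from (sw01 p q r s).symm] at H
    have h1 := stepB p r s
    have h2 := stepB q r s
    linarith
  ext x
  have : x = ![x 0, x 1, x 2, x 3] := by funext i; fin_cases i <;> rfl
  rw [this]
  simpa using stepC (x 0) (x 1) (x 2) (x 3)

theorem diag_zero_aux (n : ℕ) (ξF : ℝ)
    (ηF : EuclideanSpace ℝ (Fin (n-1)))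
    (T : MultilinearMap ℝ (fun _ : Fin 4 => EuclideanSpace ℝ (Fin (n-1))) ℝ)
    (h : ∀ Y : EuclideanSpace ℝ (Fin (n-1)), ‖Y‖ = 1 →
      T (fun _ => ((ξF^2 + 1)⁻¹ * ⟪Y, ηF⟫) • ηF + Y) = 0) :
    ∀ v : EuclideanSpace ℝ (Fin (n-1)), T (fun _ => v) = 0 := by
  set c : ℝ := (ξF^2 + 1)⁻¹ with hc
  have hcpos : 0 < c := by positivity
  intro v
  by_cases hv : v = 0
  · subst hv
    have : (fun _ : Fin 4 => (0:EuclideanSpace ℝ (Fin (n-1)))) = (0 : Fin 4 → EuclideanSpace ℝ (Fin (n-1))) := rfl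
    rw [this, T.map_zero]
  · set d : ℝ := c / (1 + c * ‖ηF‖^2) with hd
    have hden : 0 < 1 + c * ‖ηF‖^2 := by positivity
    set y : EuclideanSpace ℝ (Fin (n-1)) := v - (d * ⟪v, ηF⟫) • ηF with hy
    have hLy : (c * ⟪y, ηF⟫) • ηF + y = v := by
      have hip : ⟪y, ηF⟫ = ⟪v, ηF⟫ * (1 - d * ‖ηF‖^2) := by
        rw [hy, inner_sub_left, real_inner_smul_left, real_inner_self_eq_norm_sq]
        ring
      rw [hy, hip]
      have hdc : d * (1 + c * ‖ηF‖^2) = c := by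
        rw [hd]; field_simp
      have hco : c * (⟪v, ηF⟫ * (1 - d * ‖ηF‖^2)) = d * ⟪v, ηF⟫ := by
        linear_combination (-(⟪v, ηF⟫ : ℝ)) * hdc
      rw [hco]; abel
    have hy0 : y ≠ 0 := by
      intro h0
      apply hv
      rw [← hLy, h0, inner_zero_left, mul_zero, zero_smul, zero_add]
    have hny : (0:ℝ) < ‖y‖ := norm_pos_iff.mpr hy0
    set Y : EuclideanSpace ℝ (Fin (n-1)) := ‖y‖⁻¹ • y with hY
    have hYnorm : ‖Y‖ = 1 := by
      rw [hY, norm_smul, norm_inv, norm_norm, inv_mul_cancel₀ hny.ne']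
    have harg : (c * ⟪Y, ηF⟫) • ηF + Y = ‖y‖⁻¹ • v := by
      rw [hY, real_inner_smul_left, ← hLy]
      rw [smul_add, smul_smul]
      ring_nf
    have h0 := h Y hYnorm
    rw [harg] at h0
    have hsmul : T (fun _ : Fin 4 => ‖y‖⁻¹ • v) = (‖y‖⁻¹)^4 * T (fun _ => v) := by
      have := T.map_smul_univ (fun _ : Fin 4 => ‖y‖⁻¹) (fun _ => v)
      simpa [Finset.prod_const, smul_eq_mul] using this
    rw [hsmul] at h0
    have h4 : (‖y‖⁻¹)^4 ≠ 0 := by positivity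
    exact (mul_eq_zero.mp h0).resolve_left h4

/-- Semiclassical ellipticity computation of Lemma 2.3: contraction of a
symmetric 4-tensor with the fourth power of `(ξ_F²+1)⁻¹ (Ŷ·η_F) η_F + Ŷ`
over all unit vectors `Ŷ` forces the tensor to vanish. -/
theorem stmt_4 (n : ℕ) (hn : 3 ≤ n) (ξF : ℝ)
    (ηF : EuclideanSpace ℝ (Fin (n-1))) (hη : ηF ≠ 0)
    (T : MultilinearMap ℝ (fun _ : Fin 4 => EuclideanSpace ℝ (Fin (n-1))) ℝ)
    (hsym : ∀ (σ : Equiv.Perm (Fin 4)) (x : Fin 4 → EuclideanSpace ℝ (Fin (n-1))),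
      T (x ∘ σ) = T x)
    (h : ∀ Y : EuclideanSpace ℝ (Fin (n-1)), ‖Y‖ = 1 →
      T (fun _ => ((ξF^2 + 1)⁻¹ * ⟪Y, ηF⟫) • ηF + Y) = 0) : T = 0 :=
  polar4 T hsym (diag_zero_aux n ξF ηF T h)
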